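/- For the mean level widths W̄^i_n = (2^i (2n-2i-1)! (n-1)!)/((2n-i-1)!(n-i-1)!) · n!/(2^(n-1) i!), the normalized quantity (2^(n-1) i!/n!)·W̄^i_n lies in the interval [1, 1/(1 - i²/(2n))] whenever i² < 2n. -/

import Mathlib

/-- The mean number `W̄^i_n` of nodes at level `n-i-1` of the semantic tree of a uniformly
random plane rooted tree of size `n`. -/
noncomputable def Wbar (n i : ℕ) : ℝ :=
  (2 ^ i * (Nat.factorial (2 * n - 2 * i - 1) : ℝ) * (Nat.factorial (n - 1) : ℝ)) /
      ((Nat.factorial (2 * n - i - 1) : ℝ) * (Nat.factorial (n - i - 1) : ℝ)) *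
    ((Nat.factorial n : ℝ) / (2 ^ (n - 1) * (Nat.factorial i : ℝ)))

/-- For `0 ≤ i ≤ n-1` with `i² < 2n`, the normalized mean level width
`(2^(n-1)·i!/n!)·W̄^i_n` lies in `[1, 1/(1 - i²/(2n))]`. -/

noncomputable def Qr (n i : ℕ) : ℝ :=
  2 ^ i * (Nat.factorial (2 * n - 2 * i - 1) : ℝ) * (Nat.factorial (n - 1) : ℝ) /
      ((Nat.factorial (2 * n - i - 1) : ℝ) * (Nat.factorial (n - i - 1) : ℝ))

lemma key (n : ℕ) : ∀ i : ℕ, 1 ≤ n → i ≤ n - 1 → (i : ℝ) ^ 2 < 2 * n →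
    1 ≤ Qr n i ∧ Qr n i ≤ 1 / (1 - (i : ℝ) ^ 2 / (2 * n)) := by
  intro i
  induction i with
  | zero =>
    intro hn hi h
    have hq : Qr n 0 = 1 := by
      unfold Qr
      simp only [Nat.mul_zero, Nat.sub_zero, pow_zero, one_mul]
      rw [div_self (by positivity)]
    rw [hq]
    norm_num
  | succ i ih =>
    intro hn hi h
    obtain ⟨k, hk⟩ : ∃ k, n = i + 2 + k := ⟨n - i - 2, by omega⟩
    subst hk
    have hx : (0:ℝ) ≤ (i:ℝ) := by positivity
    have hirl : (i:ℝ)^2 < 2*((i:ℕ)+2+k : ℕ) := by push_cast at h ⊢; nlinarith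
    obtain ⟨ih1, ih2⟩ := ih (by omega) (by omega) hirl
    -- rewrite nat subtractions in ih
    unfold Qr at ih1 ih2 ⊢
    rw [show 2*(i+2+k) - 2*i - 1 = 2*k+3 from by omega,
        show (i+2+k) - 1 = i+k+1 from by omega,
        show 2*(i+2+k) - i - 1 = i+2*k+3 from by omega,
        show (i+2+k) - i - 1 = k+1 from by omega] at ih1 ih2
    rw [show 2*(i+2+k) - 2*(i+1) - 1 = 2*k+1 from by omega,
        show (i+2+k) - 1 = i+k+1 from by omega,
        show 2*(i+2+k) - (i+1) - 1 = i+2*k+2 from by omega,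
        show (i+2+k) - (i+1) - 1 = k from by omega]
    rw [show (2*k+3).factorial = (2*k+3)*((2*k+2)*(2*k+1).factorial) from by
          rw [show 2*k+3 = (2*k+2)+1 from by omega, Nat.factorial_succ,
              show 2*k+2 = (2*k+1)+1 from by omega, Nat.factorial_succ],
        show (i+2*k+3).factorial = (i+2*k+3)*(i+2*k+2).factorial from by
          rw [show i+2*k+3 = (i+2*k+2)+1 from by omega, Nat.factorial_succ],
        show (k+1).factorial = (k+1)*k.factorial from Nat.factorial_succ k] at ih1 ih2
    push_cast at ih1 ih2 hirl h ⊢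
    set A : ℝ := ((2*k+1).factorial : ℝ) with hA
    set B : ℝ := ((i+k+1).factorial : ℝ) with hB
    set C : ℝ := ((i+2*k+2).factorial : ℝ) with hC
    set D : ℝ := ((k).factorial : ℝ) with hD
    have hApos : 0 < A := by positivity
    have hBpos : 0 < B := by positivity
    have hCpos : 0 < C := by positivity
    have hDpos : 0 < D := by positivity
    set x : ℝ := (i:ℝ) with hxdef
    set m : ℝ := (k:ℝ) with hmdef
    have hm : (0:ℝ) ≤ m := by positivity
    set P : ℝ := 2^i * A * B / (C * D) with hP
    have hPpos : 0 < P := by positivity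
    have heq1 : 2^i * ((2*m+3)*((2*m+2)*A)) * B / ((x+2*m+3)*C * ((m+1)*D))
        = P * ((2*m+3)*(2*m+2)/((x+2*m+3)*(m+1))) := by
      rw [hP]
      field_simp [hCpos.ne', hDpos.ne']
    have heq2 : (2:ℝ)^(i+1) * A * B / (C * D) = 2 * P := by
      rw [hP]; field_simp; ring
    rw [heq1] at ih1 ih2
    rw [heq2]
    set r : ℝ := (2*m+3)*(2*m+2)/((x+2*m+3)*(m+1)) with hr
    have hrpos : 0 < r := by positivity
    clear_value A B C D x m P r
    clear ih hA hB hC hD hxdef hmdef hP heq1 heq2 hn hi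
    have hr2 : r ≤ 2 := by
      rw [hr, div_le_iff₀ (by positivity)]
      nlinarith
    constructor
    · nlinarith
    · -- upper bound
      have hN : (0:ℝ) < 2*(x+2+m) := by positivity
      have hb : (0:ℝ) < 1 - (x+1)^2/(2*(x+2+m)) := by
        rw [sub_pos, div_lt_one hN]; linarith
      have ha : (0:ℝ) < 1 - x^2/(2*(x+2+m)) := by
        rw [sub_pos, div_lt_one hN]; linarith
      rw [le_div_iff₀ hb]
      have ih2' : P * r * (1 - x^2/(2*(x+2+m))) ≤ 1 := by
        rw [← le_div_iff₀ ha]; exact ih2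
      have hstep : 2 * (1 - (x+1)^2/(2*(x+2+m))) ≤ r * (1 - x^2/(2*(x+2+m))) := by
        rw [hr, div_mul_eq_mul_div, le_div_iff₀ (by positivity)]
        have e1 : 1 - (x+1)^2/(2*(x+2+m)) = (2*(x+2+m) - (x+1)^2)/(2*(x+2+m)) := by
          field_simp
        have e2 : 1 - x^2/(2*(x+2+m)) = (2*(x+2+m) - x^2)/(2*(x+2+m)) := by
          field_simp
        have e3 : 2 * ((2*(x+2+m) - (x+1)^2)/(2*(x+2+m))) * ((x+2*m+3)*(m+1))
            = (2 * (2*(x+2+m) - (x+1)^2) * ((x+2*m+3)*(m+1))) / (2*(x+2+m)) := by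
          ring
        have e4 : (2*m+3)*(2*m+2) * ((2*(x+2+m) - x^2)/(2*(x+2+m)))
            = ((2*m+3)*(2*m+2) * (2*(x+2+m) - x^2)) / (2*(x+2+m)) := by
          ring
        rw [e1, e2, e3, e4, div_le_div_iff_of_pos_right hN]
        have hkey : (0:ℝ) ≤ (2*m+2) * (x^3 + 2*m*x + 3*x + 2*m + 3) := by
          have h1 : (0:ℝ) ≤ 2*m+2 := by linarith
          have h2 : (0:ℝ) ≤ x^3 + 2*m*x + 3*x + 2*m + 3 := by positivity
          exact mul_nonneg h1 h2
        nlinarith [hkey]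
      calc 2 * P * (1 - (x+1)^2/(2*(x+2+m)))
          = P * (2 * (1 - (x+1)^2/(2*(x+2+m)))) := by ring
        _ ≤ P * (r * (1 - x^2/(2*(x+2+m)))) := by
            apply mul_le_mul_of_nonneg_left hstep (le_of_lt hPpos)
        _ = P * r * (1 - x^2/(2*(x+2+m))) := by ring
        _ ≤ 1 := ih2'

lemma normalized_eq (n i : ℕ) :
    2 ^ (n - 1) * (Nat.factorial i : ℝ) / (Nat.factorial n : ℝ) * Wbar n i = Qr n i := by
  unfold Wbar Qr
  have h1 : ((Nat.factorial n : ℝ)) ≠ 0 := by positivity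
  have h2 : ((Nat.factorial i : ℝ)) ≠ 0 := by positivity
  have h3 : ((2:ℝ)^(n-1)) ≠ 0 := by positivity
  field_simp


theorem level_width_bounds (n i : ℕ) (hn : 1 ≤ n) (hi : i ≤ n - 1)
    (h : (i : ℝ) ^ 2 < 2 * n) :
    1 ≤ 2 ^ (n - 1) * (Nat.factorial i : ℝ) / (Nat.factorial n : ℝ) * Wbar n i ∧
    2 ^ (n - 1) * (Nat.factorial i : ℝ) / (Nat.factorial n : ℝ) * Wbar n i ≤
      1 / (1 - (i : ℝ) ^ 2 / (2 * n)) := by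
  rw [normalized_eq]
  exact key n i hn hi h
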